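/- For every integer k ≥ 3: c₁((0,w),(0,w)) = 0 for every w ∈ ℝ, and there exists a constant K > 0 such that c₁((0,w),(0,z)) ≥ K for every w ∈ ℝ and every z < w. -/

import Mathlib

open MeasureTheory intervalIntegral

noncomputable section

/-- The set of achievable costs for the planar control system
`ẋ₁ = u₁`, `ẋ₂ = x₁² + u₂ x₁^k` with Lagrangian `½(u₁² + u₂²)`, over essentially
bounded measurable controls and absolutely continuous trajectories (encoded by the
integral formulation of the ODE) joining `a` to `b` in time `T`. -/
def planarCostSet (k : ℕ) (T : ℝ) (a b : ℝ × ℝ) : Set ℝ :=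
  {r : ℝ | ∃ u₁ u₂ x₁ x₂ : ℝ → ℝ,
    Measurable u₁ ∧ Measurable u₂ ∧
    (∃ C : ℝ, ∀ᵐ t ∂(volume : Measure ℝ), t ∈ Set.Icc 0 T → |u₁ t| ≤ C ∧ |u₂ t| ≤ C) ∧
    ContinuousOn x₁ (Set.Icc 0 T) ∧ ContinuousOn x₂ (Set.Icc 0 T) ∧
    x₁ 0 = a.1 ∧ x₂ 0 = a.2 ∧ x₁ T = b.1 ∧ x₂ T = b.2 ∧
    (∀ t ∈ Set.Icc (0:ℝ) T, x₁ t = x₁ 0 + ∫ s in (0:ℝ)..t, u₁ s) ∧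
    (∀ t ∈ Set.Icc (0:ℝ) T, x₂ t = x₂ 0 + ∫ s in (0:ℝ)..t, (x₁ s ^ 2 + u₂ s * x₁ s ^ k)) ∧
    r = (1 / 2) * ∫ t in (0:ℝ)..T, (u₁ t ^ 2 + u₂ t ^ 2)}

/-- The optimal control cost `c_T(a,b)` for the planar system of Section 2. -/
def planarCost (k : ℕ) (T : ℝ) (a b : ℝ × ℝ) : ℝ :=
  sInf (planarCostSet k T a b)


lemma zero_mem_planarCostSet (k : ℕ) (w : ℝ) : (0:ℝ) ∈ planarCostSet k 1 (0, w) (0, w) := by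
  refine ⟨0, 0, 0, fun _ => w, measurable_const, measurable_const,
    ⟨0, Filter.Eventually.of_forall fun t _ => by simp⟩,
    continuousOn_const, continuousOn_const, rfl, rfl, rfl, rfl, ?_, ?_, by simp⟩
  · intro t ht; simp
  · intro t ht; simp

lemma nonneg_of_mem_planarCostSet {k : ℕ} {T : ℝ} (hT : 0 ≤ T) {a b : ℝ × ℝ} {r : ℝ}
    (hr : r ∈ planarCostSet k T a b) : 0 ≤ r := by
  obtain ⟨u₁, u₂, x₁, x₂, -, -, -, -, -, -, -, -, -, -, -, hrdef⟩ := hr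
  rw [hrdef]
  have : 0 ≤ ∫ t in (0:ℝ)..T, (u₁ t ^ 2 + u₂ t ^ 2) :=
    intervalIntegral.integral_nonneg hT (fun t _ => by positivity)
  linarith

lemma nonempty_planarCostSet (k : ℕ) (w z : ℝ) :
    (planarCostSet k 1 (0, w) (0, z)).Nonempty := by
  classical
  let x₁ : ℝ → ℝ := fun t => t - t^2
  have hx₁cont : Continuous x₁ := by fun_prop
  have hIpos : 0 < ∫ s in (0:ℝ)..1, x₁ s ^ (2*k) := by
    apply intervalIntegral.intervalIntegral_pos_of_pos_on
    · exact (hx₁cont.pow _).intervalIntegrable 0 1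
    · intro s hs
      have h1 : 0 < x₁ s := by
        show 0 < s - s^2
        nlinarith [hs.1, hs.2]
      positivity
    · norm_num
  let I₂ : ℝ := ∫ s in (0:ℝ)..1, x₁ s ^ 2
  let β : ℝ := (z - w - I₂) / (∫ s in (0:ℝ)..1, x₁ s ^ (2*k))
  let u₁ : ℝ → ℝ := fun t => 1 - 2*t
  let u₂ : ℝ → ℝ := fun s => β * x₁ s ^ k
  have hu₂cont : Continuous u₂ := by fun_prop
  let f : ℝ → ℝ := fun s => x₁ s ^ 2 + u₂ s * x₁ s ^ k
  have hfcont : Continuous f := by fun_prop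
  let x₂ : ℝ → ℝ := fun t => w + ∫ s in (0:ℝ)..t, f s
  have hx₂cont : Continuous x₂ :=
    continuous_const.add (intervalIntegral.continuous_primitive
      (fun a b => hfcont.intervalIntegrable a b) 0)
  have hu₁m : Measurable u₁ := by fun_prop
  have hu₂m : Measurable u₂ := by fun_prop
  have hbd : ∀ᵐ t ∂(volume : Measure ℝ), t ∈ Set.Icc (0:ℝ) 1 →
      |u₁ t| ≤ 1 + |β| ∧ |u₂ t| ≤ 1 + |β| := by
    refine Filter.Eventually.of_forall fun t ht => ⟨?_, ?_⟩
    · have h1 := ht.1; have h2 := ht.2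
      show |1 - 2*t| ≤ 1 + |β|
      have hx : (1:ℝ) - 2*t = 1 - 2*t := rfl
      rw [abs_le]; constructor <;> nlinarith [abs_nonneg β]
    · show |β * x₁ t ^ k| ≤ 1 + |β|
      rw [abs_mul, abs_pow]
      have h1 : |x₁ t| ≤ 1 := by
        have hx : x₁ t = t - t^2 := rfl
        rw [hx, abs_le]
        constructor <;> nlinarith [ht.1, ht.2]
      have h2 : |x₁ t| ^ k ≤ 1 := pow_le_one₀ (abs_nonneg _) h1
      nlinarith [abs_nonneg β, pow_nonneg (abs_nonneg (x₁ t)) k]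
  have hx₁0 : x₁ 0 = (0:ℝ) := by show (0:ℝ) - 0^2 = 0; ring
  have hx₂0 : x₂ 0 = w := by show w + _ = w; simp
  have hx₁1 : x₁ 1 = (0:ℝ) := by show (1:ℝ) - 1^2 = 0; ring
  have hx₂1 : x₂ 1 = z := by
    show w + (∫ s in (0:ℝ)..1, f s) = z
    have hfeq : f = fun s => x₁ s ^ 2 + β * x₁ s ^ (2*k) := by
      funext s
      show x₁ s ^ 2 + (β * x₁ s ^ k) * x₁ s ^ k = _
      rw [two_mul, pow_add]; ring
    have : (∫ s in (0:ℝ)..1, f s) = I₂ + β * ∫ s in (0:ℝ)..1, x₁ s ^ (2*k) := by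
      rw [hfeq]
      show (∫ s in (0:ℝ)..1, (x₁ s ^ 2 + β * x₁ s ^ (2*k))) = _
      rw [intervalIntegral.integral_add (f := fun s => x₁ s ^ 2) (g := fun s => β * x₁ s ^ (2*k))
        ((hx₁cont.pow 2).intervalIntegrable 0 1)
        ((continuous_const.mul (hx₁cont.pow _)).intervalIntegrable 0 1),
        intervalIntegral.integral_const_mul]
    rw [this]
    have : β * (∫ s in (0:ℝ)..1, x₁ s ^ (2*k)) = z - w - I₂ :=
      div_mul_cancel₀ _ (ne_of_gt hIpos)
    rw [this]; ring
  have hode₁ : ∀ t ∈ Set.Icc (0:ℝ) 1, x₁ t = x₁ 0 + ∫ s in (0:ℝ)..t, u₁ s := by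
    intro t ht
    rw [hx₁0]
    show t - t^2 = 0 + ∫ s in (0:ℝ)..t, (1 - 2*s)
    rw [intervalIntegral.integral_sub (by apply Continuous.intervalIntegrable; continuity)
      (by apply Continuous.intervalIntegrable; continuity),
      intervalIntegral.integral_const_mul]
    simp [integral_id]
    ring
  have hode₂ : ∀ t ∈ Set.Icc (0:ℝ) 1, x₂ t = x₂ 0 + ∫ s in (0:ℝ)..t,
      (x₁ s ^ 2 + u₂ s * x₁ s ^ k) := by
    intro t ht
    show x₂ t = x₂ 0 + ∫ s in (0:ℝ)..t, f s
    rw [hx₂0]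
  exact ⟨(1/2) * ∫ t in (0:ℝ)..1, (u₁ t ^ 2 + u₂ t ^ 2), u₁, u₂, x₁, x₂, hu₁m, hu₂m,
    ⟨1 + |β|, hbd⟩, hx₁cont.continuousOn, hx₂cont.continuousOn,
    hx₁0, hx₂0, hx₁1, hx₂1, hode₁, hode₂, rfl⟩


lemma integrableOn_Ioc01_of_bound {f : ℝ → ℝ}
    (hf : AEStronglyMeasurable f (volume.restrict (Set.Ioc (0:ℝ) 1))) {D : ℝ}
    (hD : ∀ᵐ t ∂(volume.restrict (Set.Ioc (0:ℝ) 1)), |f t| ≤ D) :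
    IntegrableOn f (Set.Ioc (0:ℝ) 1) volume :=
  Integrable.mono' (integrable_const D) hf (hD.mono fun t h => by simpa using h)

lemma intervalIntegrable_of_integrableOn_Ioc01 {f : ℝ → ℝ}
    (hf : IntegrableOn f (Set.Ioc (0:ℝ) 1) volume) {a b : ℝ}
    (ha : a ∈ Set.Icc (0:ℝ) 1) (hb : b ∈ Set.Icc (0:ℝ) 1) :
    IntervalIntegrable f volume a b := by
  rw [intervalIntegrable_iff]
  exact hf.mono_set (Set.Ioc_subset_Ioc (le_min ha.1 hb.1) (max_le ha.2 hb.2))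

set_option maxHeartbeats 1000000 in

set_option maxHeartbeats 1000000 in
lemma lower_bound (j : ℕ) (w z r : ℝ) (hzw : z < w)
    (hr : r ∈ planarCostSet (j+3) 1 (0, w) (0, z)) : 1/32 ≤ r := by
  obtain ⟨u₁, u₂, x₁, x₂, hu₁m, hu₂m, ⟨C, hC⟩, hx₁c, hx₂c, hx₁0, hx₂0, hx₁1, hx₂1,
    hode₁, hode₂, hrdef⟩ := hr
  replace hx₁0 : x₁ 0 = 0 := hx₁0
  replace hx₂0 : x₂ 0 = w := hx₂0
  replace hx₂1 : x₂ 1 = z := hx₂1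
  have h01 : (0:ℝ) ∈ Set.Icc (0:ℝ) 1 := by norm_num
  have h11 : (1:ℝ) ∈ Set.Icc (0:ℝ) 1 := by norm_num
  -- a.e. bounds on the restricted measure
  have haeu₁ : ∀ᵐ t ∂(volume.restrict (Set.Ioc (0:ℝ) 1)), |u₁ t| ≤ |C| := by
    filter_upwards [ae_restrict_of_ae hC, ae_restrict_mem measurableSet_Ioc] with t h1 h2
    exact le_trans (h1 (Set.Ioc_subset_Icc_self h2)).1 (le_abs_self C)
  have haeu₂ : ∀ᵐ t ∂(volume.restrict (Set.Ioc (0:ℝ) 1)), |u₂ t| ≤ |C| := by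
    filter_upwards [ae_restrict_of_ae hC, ae_restrict_mem measurableSet_Ioc] with t h1 h2
    exact le_trans (h1 (Set.Ioc_subset_Icc_self h2)).2 (le_abs_self C)
  -- integrability of the controls
  have hu₁i : IntegrableOn u₁ (Set.Ioc (0:ℝ) 1) volume :=
    integrableOn_Ioc01_of_bound hu₁m.aestronglyMeasurable.restrict haeu₁
  have hu₁absi : IntegrableOn (fun t => |u₁ t|) (Set.Ioc (0:ℝ) 1) volume := hu₁i.abs
  have hu₁sqi : IntegrableOn (fun t => u₁ t ^ 2) (Set.Ioc (0:ℝ) 1) volume := by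
    apply integrableOn_Ioc01_of_bound ((hu₁m.pow_const 2).aestronglyMeasurable.restrict)
      (D := |C|^2)
    filter_upwards [haeu₁] with t h1
    rw [abs_pow]
    exact pow_le_pow_left₀ (abs_nonneg _) h1 2
  have hu₂sqi : IntegrableOn (fun t => u₂ t ^ 2) (Set.Ioc (0:ℝ) 1) volume := by
    apply integrableOn_Ioc01_of_bound ((hu₂m.pow_const 2).aestronglyMeasurable.restrict)
      (D := |C|^2)
    filter_upwards [haeu₂] with t h1
    rw [abs_pow]
    exact pow_le_pow_left₀ (abs_nonneg _) h1 2
  -- energies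
  set E₁ : ℝ := ∫ t in (0:ℝ)..1, u₁ t ^ 2 with hE₁def
  set E₂ : ℝ := ∫ t in (0:ℝ)..1, u₂ t ^ 2 with hE₂def
  have hE₁0 : 0 ≤ E₁ := intervalIntegral.integral_nonneg zero_le_one fun t _ => sq_nonneg _
  have hE₂0 : 0 ≤ E₂ := intervalIntegral.integral_nonneg zero_le_one fun t _ => sq_nonneg _
  have hE : E₁ + E₂ = 2 * r := by
    rw [hrdef, hE₁def, hE₂def,
      ← intervalIntegral.integral_add (intervalIntegrable_of_integrableOn_Ioc01 hu₁sqi h01 h11)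
        (intervalIntegrable_of_integrableOn_Ioc01 hu₂sqi h01 h11)]
    ring
  have hrnonneg : 0 ≤ r := by linarith
  by_contra hcon
  push_neg at hcon
  have hE₁le : E₁ ≤ 2 * r := by linarith
  have hE₂le : E₂ ≤ 2 * r := by linarith
  -- L0 : energy on subintervals
  have L0 : ∀ a b : ℝ, a ∈ Set.Icc (0:ℝ) 1 → b ∈ Set.Icc (0:ℝ) 1 → a ≤ b →
      (∫ s in a..b, u₁ s ^ 2) ≤ E₁ := by
    intro a b ha hb hab
    have h1 := intervalIntegral.integral_add_adjacent_intervals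
      (intervalIntegrable_of_integrableOn_Ioc01 hu₁sqi h01 ha)
      (intervalIntegrable_of_integrableOn_Ioc01 hu₁sqi ha hb)
    have h2 := intervalIntegral.integral_add_adjacent_intervals
      (intervalIntegrable_of_integrableOn_Ioc01 hu₁sqi h01 hb)
      (intervalIntegrable_of_integrableOn_Ioc01 hu₁sqi hb h11)
    have h3 : 0 ≤ ∫ s in (0:ℝ)..a, u₁ s ^ 2 :=
      intervalIntegral.integral_nonneg ha.1 fun t _ => sq_nonneg _
    have h4 : 0 ≤ ∫ s in b..(1:ℝ), u₁ s ^ 2 :=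
      intervalIntegral.integral_nonneg hb.2 fun t _ => sq_nonneg _
    rw [hE₁def]
    linarith
  -- L1 : Cauchy–Schwarz-type bound via AM-GM
  have L1 : ∀ a b : ℝ, a ∈ Set.Icc (0:ℝ) 1 → b ∈ Set.Icc (0:ℝ) 1 → a ≤ b → ∀ ε : ℝ, 0 < ε →
      |∫ s in a..b, u₁ s| ≤ ε * (b - a) / 2 + E₁ / (2 * ε) := by
    intro a b ha hb hab ε hε
    have step1 : |∫ s in a..b, u₁ s| ≤ ∫ s in a..b, |u₁ s| :=
      intervalIntegral.abs_integral_le_integral_abs hab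
    have step2 : (∫ s in a..b, |u₁ s|) ≤ ∫ s in a..b, (ε/2 + 1/(2*ε) * u₁ s ^ 2) := by
      apply intervalIntegral.integral_mono_on hab
        (intervalIntegrable_of_integrableOn_Ioc01 hu₁absi ha hb)
        ((_root_.intervalIntegrable_const).add
          ((intervalIntegrable_of_integrableOn_Ioc01 hu₁sqi ha hb).const_mul _))
      intro s _
      rw [← sq_abs (u₁ s), ← sub_nonneg]
      have : ε/2 + 1/(2*ε) * |u₁ s| ^ 2 - |u₁ s| = ((|u₁ s| - ε)^2) / (2*ε) := by
        field_simp
        ring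
      rw [this]
      positivity
    have step3 : (∫ s in a..b, (ε/2 + 1/(2*ε) * u₁ s ^ 2))
        = ε/2 * (b - a) + 1/(2*ε) * ∫ s in a..b, u₁ s ^ 2 := by
      rw [intervalIntegral.integral_add (_root_.intervalIntegrable_const)
        ((intervalIntegrable_of_integrableOn_Ioc01 hu₁sqi ha hb).const_mul _),
        intervalIntegral.integral_const, intervalIntegral.integral_const_mul]
      simp [smul_eq_mul]
      ring
    have step4 : 1/(2*ε) * (∫ s in a..b, u₁ s ^ 2) ≤ 1/(2*ε) * E₁ :=
      mul_le_mul_of_nonneg_left (L0 a b ha hb hab) (by positivity)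
    calc |∫ s in a..b, u₁ s| ≤ ∫ s in a..b, (ε/2 + 1/(2*ε) * u₁ s ^ 2) := le_trans step1 step2
      _ = ε/2 * (b - a) + 1/(2*ε) * ∫ s in a..b, u₁ s ^ 2 := step3
      _ ≤ ε/2 * (b - a) + 1/(2*ε) * E₁ := by linarith
      _ = ε * (b - a) / 2 + E₁ / (2 * ε) := by ring
  -- formula for x₁
  have hx₁ : ∀ t ∈ Set.Icc (0:ℝ) 1, x₁ t = ∫ s in (0:ℝ)..t, u₁ s := by
    intro t ht
    rw [hode₁ t ht, hx₁0, zero_add]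
  -- maximum of |x₁|
  obtain ⟨t₀, ht₀, hmax⟩ := isCompact_Icc.exists_isMaxOn (Set.nonempty_Icc.mpr zero_le_one)
    hx₁c.abs
  set M : ℝ := |x₁ t₀| with hMdef
  have hMle : ∀ t ∈ Set.Icc (0:ℝ) 1, |x₁ t| ≤ M := fun t ht => hmax ht
  have hM0 : 0 ≤ M := abs_nonneg _
  -- degenerate case M = 0
  rcases eq_or_lt_of_le hM0 with hMeq | hMpos
  · exfalso
    have hx₁z : ∀ t ∈ Set.Icc (0:ℝ) 1, x₁ t = 0 := by
      intro t ht
      have := hMle t ht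
      rw [← hMeq] at this
      exact abs_eq_zero.mp (le_antisymm this (abs_nonneg _))
    have hint : (∫ s in (0:ℝ)..1, (x₁ s ^ 2 + u₂ s * x₁ s ^ (j+3))) = 0 := by
      rw [intervalIntegral.integral_congr (g := fun _ => (0:ℝ))]
      · simp
      · intro s hs
        rw [Set.uIcc_of_le zero_le_one] at hs
        simp [hx₁z s hs]
    have := hode₂ 1 h11
    rw [hx₂0, hx₂1, hint] at this
    linarith
  -- M² ≤ E₁
  have hM2 : M ^ 2 ≤ E₁ := by
    have h1 : M = |∫ s in (0:ℝ)..t₀, u₁ s| := by rw [hMdef, hx₁ t₀ ht₀]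
    have h2 := L1 0 t₀ h01 ht₀ ht₀.1 M hMpos
    rw [← h1] at h2
    have ht₀1 : t₀ ≤ 1 := ht₀.2
    have : M ≤ M/2 + E₁/(2*M) := by
      calc M ≤ M * (t₀ - 0)/2 + E₁/(2*M) := h2
        _ ≤ M/2 + E₁/(2*M) := by nlinarith
    have h3 : 0 < 2*M := by linarith
    have h4 : E₁/(2*M)*(2*M) = E₁ := div_mul_cancel₀ _ (ne_of_gt h3)
    have h5 : 0 ≤ (E₁/(2*M) - M/2) * (2*M) := mul_nonneg (by linarith) h3.le
    nlinarith [h4, h5]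
  have hE₁pos : 0 < E₁ := lt_of_lt_of_le (by positivity) hM2
  set ℓ : ℝ := M^2 / (4*E₁) with hℓdef
  have hℓpos : 0 < ℓ := by positivity
  have hℓle : ℓ ≤ 1/4 := by
    rw [hℓdef, div_le_div_iff₀ (by positivity) (by norm_num)]
    linarith
  -- choice of the interval [a,b]
  obtain ⟨a, b, hab, haI, hbI, hba, hdist⟩ : ∃ a b : ℝ, a ≤ b ∧ a ∈ Set.Icc (0:ℝ) 1 ∧
      b ∈ Set.Icc (0:ℝ) 1 ∧ b - a = ℓ ∧ ∀ t ∈ Set.Icc a b, |t - t₀| ≤ ℓ := by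
    rcases le_or_gt t₀ (1/2) with h | h
    · refine ⟨t₀, t₀ + ℓ, by linarith, ht₀, ⟨by linarith [ht₀.1], by linarith⟩, by ring, ?_⟩
      intro t ht
      rw [abs_le]
      exact ⟨by linarith [ht.1], by linarith [ht.2]⟩
    · refine ⟨t₀ - ℓ, t₀, by linarith, ⟨by linarith, by linarith [ht₀.2]⟩, ht₀, by ring, ?_⟩
      intro t ht
      rw [abs_le]
      exact ⟨by linarith [ht.1], by linarith [ht.2]⟩
  -- L2 : |x₁| ≥ M/2 on [a,b]
  have L2 : ∀ t ∈ Set.Icc a b, M/2 ≤ |x₁ t| := by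
    intro t ht
    have htI : t ∈ Set.Icc (0:ℝ) 1 := ⟨le_trans haI.1 ht.1, le_trans ht.2 hbI.2⟩
    have hdiff : x₁ t₀ - x₁ t = ∫ s in t..t₀, u₁ s := by
      rw [hx₁ t₀ ht₀, hx₁ t htI]
      exact intervalIntegral.integral_interval_sub_left
        (intervalIntegrable_of_integrableOn_Ioc01 hu₁i h01 ht₀)
        (intervalIntegrable_of_integrableOn_Ioc01 hu₁i h01 htI)
    set ε : ℝ := 2*E₁/M with hεdef
    have hεpos : 0 < ε := by positivity
    have hd : |t - t₀| ≤ ℓ := hdist t ht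
    have key : ∀ c d : ℝ, c ∈ Set.Icc (0:ℝ) 1 → d ∈ Set.Icc (0:ℝ) 1 → c ≤ d → d - c ≤ ℓ →
        |∫ s in c..d, u₁ s| ≤ M/2 := by
      intro c d hc hd' hcd hcdl
      have h2 := L1 c d hc hd' hcd ε hεpos
      have e1 : E₁ / (2*ε) = M/4 := by
        rw [hεdef]
        field_simp
        ring
      have e2 : ε * (d - c) / 2 ≤ M/4 := by
        have : ε * (d - c) ≤ ε * ℓ := mul_le_mul_of_nonneg_left hcdl hεpos.le
        have e3 : ε * ℓ = M/2 := by
          rw [hεdef, hℓdef]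
          field_simp
          ring
        linarith
      linarith
    have hbnd : |x₁ t₀ - x₁ t| ≤ M/2 := by
      rcases le_total t t₀ with hlt | hlt
      · rw [hdiff]
        apply key t t₀ htI ht₀ hlt
        rw [abs_le] at hd
        linarith [hd.1]
      · rw [hdiff, intervalIntegral.integral_symm, abs_neg]
        apply key t₀ t ht₀ htI hlt
        rw [abs_le] at hd
        linarith [hd.2]
    have := abs_sub_abs_le_abs_sub (x₁ t₀) (x₁ t)
    rw [← hMdef] at this
    linarith
  -- x₁² interval integrability
  have hx₁sqii : ∀ {c d : ℝ}, c ∈ Set.Icc (0:ℝ) 1 → d ∈ Set.Icc (0:ℝ) 1 →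
      IntervalIntegrable (fun s => x₁ s ^ 2) volume c d := by
    intro c d hc hd
    apply ContinuousOn.intervalIntegrable
    apply ContinuousOn.pow
    apply hx₁c.mono
    calc Set.uIcc c d ⊆ Set.uIcc 0 1 :=
          Set.uIcc_subset_uIcc (by rwa [Set.uIcc_of_le zero_le_one])
            (by rwa [Set.uIcc_of_le zero_le_one])
      _ = Set.Icc 0 1 := Set.uIcc_of_le zero_le_one
  set A : ℝ := ∫ t in (0:ℝ)..1, x₁ t ^ 2 with hAdef
  -- lower bound on A
  have hA_lb : M^2/4 * ℓ ≤ A := by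
    have h1 := intervalIntegral.integral_add_adjacent_intervals
      (hx₁sqii h01 haI) (hx₁sqii haI hbI)
    have h2 := intervalIntegral.integral_add_adjacent_intervals
      (hx₁sqii h01 hbI) (hx₁sqii hbI h11)
    have h3 : 0 ≤ ∫ s in (0:ℝ)..a, x₁ s ^ 2 :=
      intervalIntegral.integral_nonneg haI.1 fun t _ => sq_nonneg _
    have h4 : 0 ≤ ∫ s in b..(1:ℝ), x₁ s ^ 2 :=
      intervalIntegral.integral_nonneg hbI.2 fun t _ => sq_nonneg _
    have h5 : M^2/4 * ℓ ≤ ∫ s in a..b, x₁ s ^ 2 := by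
      have h6 : (∫ s in a..b, (M/2)^2) ≤ ∫ s in a..b, x₁ s ^ 2 := by
        apply intervalIntegral.integral_mono_on hab intervalIntegrable_const
          (hx₁sqii haI hbI)
        intro t ht
        have := L2 t ht
        calc (M/2)^2 ≤ |x₁ t|^2 := pow_le_pow_left₀ (by linarith) this 2
          _ = x₁ t ^ 2 := sq_abs _
      rw [intervalIntegral.integral_const, smul_eq_mul, hba] at h6
      calc M^2/4 * ℓ = ℓ * (M/2)^2 := by ring
        _ ≤ ∫ s in a..b, x₁ s ^ 2 := h6
    rw [hAdef]
    linarith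
  -- integrability of the cross term and of g
  have hx₁ae : AEMeasurable x₁ (volume.restrict (Set.Ioc (0:ℝ) 1)) :=
    (hx₁c.aemeasurable measurableSet_Icc).mono_measure
      (Measure.restrict_mono Set.Ioc_subset_Icc_self le_rfl)
  have haex₁ : ∀ᵐ t ∂(volume.restrict (Set.Ioc (0:ℝ) 1)), |x₁ t| ≤ M := by
    filter_upwards [ae_restrict_mem measurableSet_Ioc] with t h2
    exact hMle t (Set.Ioc_subset_Icc_self h2)
  have hcrossi : IntegrableOn (fun s => u₂ s * x₁ s ^ (j+3)) (Set.Ioc (0:ℝ) 1) volume := by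
    apply integrableOn_Ioc01_of_bound
      ((hu₂m.aemeasurable.restrict.mul (hx₁ae.pow_const (j+3))).aestronglyMeasurable)
      (D := |C| * M^(j+3))
    filter_upwards [haeu₂, haex₁] with t h1 h2
    show |u₂ t * x₁ t ^ (j+3)| ≤ _
    rw [abs_mul, abs_pow]
    exact mul_le_mul h1 (pow_le_pow_left₀ (abs_nonneg _) h2 _)
      (by positivity) (abs_nonneg _)
  have hgi : IntegrableOn (fun s => u₂ s ^ 2 * x₁ s ^ (2*j+4)) (Set.Ioc (0:ℝ) 1) volume := by
    apply integrableOn_Ioc01_of_bound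
      (((hu₂m.pow_const 2).aemeasurable.restrict.mul
        (hx₁ae.pow_const (2*j+4))).aestronglyMeasurable)
      (D := |C|^2 * M^(2*j+4))
    filter_upwards [haeu₂, haex₁] with t h1 h2
    show |u₂ t ^ 2 * x₁ t ^ (2*j+4)| ≤ _
    rw [abs_mul, abs_pow, abs_pow]
    exact mul_le_mul (pow_le_pow_left₀ (abs_nonneg _) h1 2)
      (pow_le_pow_left₀ (abs_nonneg _) h2 _) (by positivity) (by positivity)
  set G : ℝ := ∫ s in (0:ℝ)..1, u₂ s ^ 2 * x₁ s ^ (2*j+4) with hGdef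
  -- splitting of the x₂ dynamics
  have hsplit : z - w = A + ∫ s in (0:ℝ)..1, u₂ s * x₁ s ^ (j+3) := by
    have := hode₂ 1 h11
    rw [hx₂0, hx₂1,
      intervalIntegral.integral_add (hx₁sqii h01 h11)
        (intervalIntegrable_of_integrableOn_Ioc01 hcrossi h01 h11)] at this
    rw [hAdef]
    linarith
  -- lower bound for the cross term
  have h5 : -(1/2) * (G + A) ≤ ∫ s in (0:ℝ)..1, u₂ s * x₁ s ^ (j+3) := by
    have hpt : ∀ s : ℝ, (-(1/2)) * (u₂ s ^ 2 * x₁ s ^ (2*j+4) + x₁ s ^ 2)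
        ≤ u₂ s * x₁ s ^ (j+3) := by
      intro s
      have e1 : x₁ s ^ (j+2) * x₁ s ^ (j+2) = x₁ s ^ (2*j+4) := by
        rw [← pow_add]; congr 1; omega
      have e2 : x₁ s ^ (j+2) * x₁ s = x₁ s ^ (j+3) := by rw [← pow_succ]
      rw [← e1, ← e2]
      nlinarith [sq_nonneg (u₂ s * x₁ s ^ (j+2) + x₁ s)]
    have hmono := intervalIntegral.integral_mono_on zero_le_one
      (((intervalIntegrable_of_integrableOn_Ioc01 hgi h01 h11).add
        (hx₁sqii h01 h11)).const_mul (-(1/2)))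
      (intervalIntegrable_of_integrableOn_Ioc01 hcrossi h01 h11)
      (fun s _ => hpt s)
    rw [intervalIntegral.integral_const_mul,
      intervalIntegral.integral_add (intervalIntegrable_of_integrableOn_Ioc01 hgi h01 h11)
        (hx₁sqii h01 h11)] at hmono
    rw [hGdef, hAdef]
    exact hmono
  -- upper bound for G
  have h6 : G ≤ M^(2*j+4) * E₂ := by
    have hmono := intervalIntegral.integral_mono_on zero_le_one
      (intervalIntegrable_of_integrableOn_Ioc01 hgi h01 h11)
      ((intervalIntegrable_of_integrableOn_Ioc01 hu₂sqi h01 h11).const_mul (M^(2*j+4)))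
      (fun t ht => ?_)
    · rw [intervalIntegral.integral_const_mul] at hmono
      exact hmono
    · have hb1 : x₁ t ^ (2*j+4) ≤ M^(2*j+4) := by
        have e1 : (2*j+4) = 2*(j+2) := by omega
        rw [e1, pow_mul, pow_mul]
        apply pow_le_pow_left₀ (sq_nonneg _)
        have := hMle t ht
        rw [abs_le] at this
        nlinarith [this.1, this.2]
      calc u₂ t ^ 2 * x₁ t ^ (2*j+4) ≤ u₂ t ^ 2 * M^(2*j+4) :=
            mul_le_mul_of_nonneg_left hb1 (sq_nonneg _)
        _ = M^(2*j+4) * u₂ t ^ 2 := by ring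
  -- final contradiction
  have h7 : A < M^(2*j+4) * E₂ := by
    have := hsplit
    nlinarith
  have h8 : M^4 ≤ 16 * E₁ * A := by
    have h := mul_le_mul_of_nonneg_left hA_lb (by positivity : (0:ℝ) ≤ 16*E₁)
    calc M^4 = 16*E₁*(M^2/4 * (M^2/(4*E₁))) := by field_simp; ring
      _ ≤ 16*E₁*A := h
  have h9 : M^(2*j+4) = (M^2)^j * M^4 := by
    rw [← pow_mul, ← pow_add]
  have h2r : 0 < 2*r := lt_of_lt_of_le hE₁pos hE₁le
  have hM2r : M^2 ≤ 2*r := le_trans hM2 hE₁le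
  have hpow1 : (2*r)^j ≤ 1 := pow_le_one₀ h2r.le (by linarith)
  have hstep : 16 * E₁ * A < 16 * (2*r) * ((2*r)^j * M^4 * (2*r)) := by
    calc 16 * E₁ * A < 16 * E₁ * (M^(2*j+4) * E₂) :=
          mul_lt_mul_of_pos_left h7 (by positivity)
      _ = 16 * E₁ * ((M^2)^j * M^4 * E₂) := by rw [h9]
      _ ≤ 16 * (2*r) * ((2*r)^j * M^4 * (2*r)) := by
          gcongr
  have hM4pos : 0 < M^4 := by positivity
  have hfin2 : 16*(2*r)*((2*r)^j * M^4 * (2*r)) ≤ 16*(2*r)*(M^4*(2*r)) := by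
    apply mul_le_mul_of_nonneg_left _ (by positivity)
    calc (2*r)^j * M^4 * (2*r) = (2*r)^j * (M^4 * (2*r)) := by ring
      _ ≤ 1 * (M^4*(2*r)) := mul_le_mul_of_nonneg_right hpow1 (by positivity)
      _ = M^4*(2*r) := by ring
  nlinarith [h8, hstep, hfin2, hM4pos,
    mul_nonneg (by linarith : (0:ℝ) ≤ 1/32 - r) (mul_nonneg hrnonneg hM4pos.le),
    mul_nonneg (by linarith : (0:ℝ) ≤ 1/32 - r) hM4pos.le]

/-- **Discontinuity of the cost, quantitative form** (Proposition in Section 2):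
for `k ≥ 3`, the cost of staying at `(0,w)` in time `1` is zero, while going from
`(0,w)` to `(0,z)` with `z < w` costs at least a uniform positive constant `K`. -/
theorem planarCost_diag_zero_and_lower_bound (k : ℕ) (hk : 3 ≤ k) :
    (∀ w : ℝ, planarCost k 1 (0, w) (0, w) = 0) ∧
    ∃ K : ℝ, 0 < K ∧ ∀ w z : ℝ, z < w → K ≤ planarCost k 1 (0, w) (0, z) := by
  constructor
  · intro w
    refine le_antisymm (csInf_le ⟨0, fun r hr => nonneg_of_mem_planarCostSet zero_le_one hr⟩
      (zero_mem_planarCostSet k w)) (le_csInf ⟨0, zero_mem_planarCostSet k w⟩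
      (fun r hr => nonneg_of_mem_planarCostSet zero_le_one hr))
  · refine ⟨1/32, by norm_num, fun w z hzw => ?_⟩
    obtain ⟨j, rfl⟩ : ∃ j : ℕ, k = j + 3 := ⟨k - 3, by omega⟩
    exact le_csInf (nonempty_planarCostSet (j+3) w z)
      (fun r hr => lower_bound j w z r hzw hr)
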